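/- Let h be an idempotent endomorphism of the free monoid M = FreeMonoid S. Define S₀ = {s ∈ S : h(of s) = 1} and S₁ = {s ∈ S : the word h(of s) contains exactly one occurrence of some letter not in S₀, namely s itself occurs once and every other letter of h(of s) lies in S₀}. Then for every x ∈ M, the element h(x) lies in the submonoid of M generated by {of s : s ∈ S₀ ∪ S₁}. -/

import Mathlib

open FreeMonoid

instance freeMonoidDecEq {S : Type u} [DecidableEq S] : DecidableEq (FreeMonoid S) :=
  fun a b => decidable_of_iff (toList a = toList b) toList.injective.eq_iff

theorem aux_map_self {α : Type*} (f : α → α) :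
    ∀ l : List α, l = l.map f → ∀ x ∈ l, f x = x := by
  intro l
  induction l with
  | nil => simp
  | cons a l ih =>
    intro hl x hx
    rw [List.map_cons] at hl
    injection hl with h1 h2
    rw [List.mem_cons] at hx
    rcases hx with rfl | hx
    · exact h1.symm
    · exact ih h2 x hx

theorem aux_len_le_sum : ∀ l : List ℕ, (∀ n ∈ l, 1 ≤ n) → l.length ≤ l.sum := by
  intro l
  induction l with
  | nil => simp
  | cons a l ih =>
    intro hge
    have := ih (fun n hn => hge n (by simp [hn]))
    have := hge a (by simp)
    simp only [List.length_cons, List.sum_cons]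
    omega

theorem aux_sum_one : ∀ l : List ℕ, (∀ n ∈ l, 1 ≤ n) → l.sum = l.length → ∀ n ∈ l, n = 1 := by
  intro l
  induction l with
  | nil => simp
  | cons a l ih =>
    intro hge hsum n hn
    have h1 : 1 ≤ a := hge a (by simp)
    have h2 : ∀ n ∈ l, 1 ≤ n := fun n hn => hge n (by simp [hn])
    have h3 := aux_len_le_sum l h2
    simp only [List.sum_cons, List.length_cons] at hsum
    have ha : a = 1 ∧ l.sum = l.length := by omega
    rw [List.mem_cons] at hn
    rcases hn with rfl | hn
    · exact ha.1
    · exact ih h2 ha.2 n hn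

theorem aux_flatMap_filter {α : Type*} (p : α → Bool) (F : α → List α)
    (hF : ∀ a, p a = false → F a = []) :
    ∀ l : List α, l.flatMap F = (l.filter p).flatMap F := by
  intro l
  induction l with
  | nil => simp
  | cons a l ih =>
    cases hpa : p a with
    | false => simp [List.filter_cons, hpa, ih, hF a hpa]
    | true => simp [List.filter_cons, hpa, ih]

theorem aux_flatMap_map {α : Type*} (F : α → List α) (u : α → α) :
    ∀ l : List α, (∀ t ∈ l, F t = [u t]) → l.flatMap F = l.map u := by
  intro l
  induction l with
  | nil => simp
  | cons a l ih =>
    intro hl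
    rw [List.flatMap_cons, List.map_cons, hl a (by simp), ih (fun t ht => hl t (by simp [ht]))]
    rfl

theorem aux_bind {S : Type u} (h : FreeMonoid S →* FreeMonoid S) (v : FreeMonoid S) :
    toList (h v) = (toList v).flatMap (fun t => toList (h (of t))) := by
  induction v using FreeMonoid.recOn with
  | one => simp
  | of_mul x xs ih =>
    rw [map_mul]
    simp [toList_mul, toList_of, ih]

theorem key_letter {S : Type u} [DecidableEq S]
    (h : FreeMonoid S →* FreeMonoid S) (hidem : ∀ x, h (h x) = h x) (s : S) :
    ∀ t ∈ (h (of s)).toList,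
      h (of t) = 1 ∨ ((h (of t)).toList.count t = 1 ∧
        ∀ t' : S, h (of t') ≠ 1 → t' ≠ t → (h (of t)).toList.count t' = 0) := by
  classical
  set p : S → Bool := fun a => !decide (h (of a) = 1) with hp
  have hp_iff : ∀ a, p a = true ↔ h (of a) ≠ 1 := by
    intro a; simp [hp]
  have hp_false : ∀ a, p a = false ↔ h (of a) = 1 := by
    intro a; simp [hp]
  set F : S → List S := fun a => (h (of a)).toList.filter p with hFdef
  -- Lemma A : if h (of a) ≠ 1 then F a ≠ []
  have lemA : ∀ a : S, h (of a) ≠ 1 → F a ≠ [] := by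
    intro a ha hFa
    have hall : ∀ b ∈ (h (of a)).toList, h (of b) = 1 := by
      intro b hb
      have := (List.filter_eq_nil_iff).mp hFa b hb
      simpa [hp_false] using (Bool.not_eq_true _).mp this
    have : toList (h (h (of a))) = [] := by
      rw [aux_bind h (h (of a))]
      rw [List.flatMap_eq_nil_iff]
      intro b hb
      rw [hall b hb]; rfl
    rw [hidem] at this
    exact ha (toList.injective (by simpa using this))
  -- the image word and its essential letters
  set L : List S := (h (of s)).toList with hL
  have step1 : L = L.flatMap (fun t => (h (of t)).toList) := by
    conv_lhs => rw [hL, ← hidem (of s), aux_bind h (h (of s))]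
  set FL : List S := L.filter p with hFL
  have hFnil : ∀ a, p a = false → F a = [] := by
    intro a hpa
    have : h (of a) = 1 := (hp_false a).mp hpa
    simp [hFdef, this, FreeMonoid.toList_one]
  have step2 : FL = FL.flatMap F := by
    conv_lhs => rw [hFL, step1]
    rw [List.filter_flatMap]
    exact aux_flatMap_filter p F hFnil L
  -- each essential letter's image has exactly one essential letter
  have hlen1 : ∀ t ∈ FL, (F t).length = 1 := by
    have hge : ∀ n ∈ FL.map (fun t => (F t).length), 1 ≤ n := by
      intro n hn
      rcases List.mem_map.mp hn with ⟨t, ht, rfl⟩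
      have hpt : p t = true := List.of_mem_filter ht
      have := lemA t ((hp_iff t).mp hpt)
      exact Nat.one_le_iff_ne_zero.mpr (fun hz => this (List.length_eq_zero_iff.mp hz))
    have hsum : (FL.map (fun t => (F t).length)).sum = (FL.map (fun t => (F t).length)).length := by
      rw [List.length_map]
      conv_rhs => rw [step2]
      rw [List.length_flatMap]
    intro t ht
    exact aux_sum_one _ hge hsum _ (List.mem_map.mpr ⟨t, ht, rfl⟩)
  set u : S → S := fun t => (F t).getD 0 t with hu
  have hFu : ∀ t ∈ FL, F t = [u t] := by
    intro t ht
    rcases List.length_eq_one_iff.mp (hlen1 t ht) with ⟨a, ha⟩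
    rw [ha]
    simp [hu, ha]
  have hfix : FL = FL.map u := by
    conv_lhs => rw [step2]
    exact aux_flatMap_map F u FL hFu
  have hid : ∀ t ∈ FL, u t = t := aux_map_self u FL hfix
  -- main conclusion
  intro t ht
  by_cases h1 : h (of t) = 1
  · exact Or.inl h1
  · right
    have hpt : p t = true := (hp_iff t).mpr h1
    have htFL : t ∈ FL := List.mem_filter.mpr ⟨ht, hpt⟩
    have hFt : F t = [t] := by rw [hFu t htFL, hid t htFL]
    constructor
    · have := List.count_filter (l := (h (of t)).toList) (p := p) (a := t) hpt
      rw [← this, show List.filter p (toList (h (of t))) = [t] from hFt]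
      simp
    · intro t' ht' htt'
      have hpt' : p t' = true := (hp_iff t').mpr ht'
      have := List.count_filter (l := (h (of t)).toList) (p := p) (a := t') hpt'
      rw [← this, show List.filter p (toList (h (of t))) = [t] from hFt]
      exact List.count_eq_zero.mpr (by simpa using htt')

theorem image_in_closure_of_S0_S1 {S : Type u} [DecidableEq S]
    (h : FreeMonoid S →* FreeMonoid S) (hidem : ∀ x, h (h x) = h x)
    (S0 S1 : Set S)
    (hS0 : S0 = {s : S | h (of s) = 1})
    (hS1 : S1 = {s : S | (h (of s)).toList.count s = 1 ∧
      ∀ t : S, t ∉ S0 → t ≠ s → (h (of s)).toList.count t = 0}) :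
    ∀ x : FreeMonoid S,
      h x ∈ Submonoid.closure (FreeMonoid.of '' (S0 ∪ S1)) := by
  have hcl : ∀ v : FreeMonoid S, (∀ t ∈ toList v, t ∈ S0 ∪ S1) →
      v ∈ Submonoid.closure (FreeMonoid.of '' (S0 ∪ S1)) := by
    intro v
    induction v using FreeMonoid.recOn with
    | one => intro _; exact one_mem _
    | of_mul x xs ih =>
      intro hv
      have hx : x ∈ S0 ∪ S1 := hv x (by rw [toList_mul, toList_of]; simp)
      exact mul_mem (Submonoid.subset_closure ⟨x, hx, rfl⟩)
        (ih (fun t ht => hv t (by rw [toList_mul, toList_of]; simp [ht])))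
  intro x
  apply hcl
  intro t ht
  rw [aux_bind h x] at ht
  rcases List.mem_flatMap.mp ht with ⟨a, _, hta⟩
  rcases key_letter h hidem a t hta with h1 | ⟨hc1, hc2⟩
  · left; rw [hS0]; exact h1
  · right; rw [hS1]
    refine ⟨hc1, fun t' ht' htt' => hc2 t' ?_ htt'⟩
    rw [hS0] at ht'; exact ht'
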